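/- If y_{n+1} = q/(−p + y_n) for all n ≥ 0 and all denominators are nonzero, then y_n = (q·W_{−n} + y_0·q·W_{−(n−1)})/(W_{−(n+1)} + y_0·W_{−n}) for all n ≥ 1, where W_{−m} = (−1)^{m+1}·W_m. -/

import Mathlib

def W (p q : ℝ) : ℕ → ℝ
  | 0 => 0
  | 1 => 1
  | n + 2 => p * W p q (n + 1) + q * W p q n

noncomputable def Wneg (p q : ℝ) (m : ℕ) : ℝ := (-1 : ℝ) ^ (m + 1) * W p q m

lemma wneg_rec (p q : ℝ) (n : ℕ) :
    Wneg p q (n + 2) = -p * Wneg p q (n + 1) + q * Wneg p q n := by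
  simp only [Wneg, W]
  ring

theorem stmt_6 (p q : ℝ) (hp : 0 < p) (hq : 0 < q) (y : ℕ → ℝ)
    (hrec : ∀ n : ℕ, y (n + 1) = q / (-p + y n))
    (hne : ∀ n : ℕ, -p + y n ≠ 0)
    (hden : ∀ n : ℕ, Wneg p q (n + 1) + y 0 * Wneg p q n ≠ 0) :
    ∀ n : ℕ, 1 ≤ n →
      y n = (q * Wneg p q n + y 0 * q * Wneg p q (n - 1)) /
        (Wneg p q (n + 1) + y 0 * Wneg p q n) := by
  have main : ∀ n : ℕ, y (n + 1) =
      (q * Wneg p q (n + 1) + y 0 * q * Wneg p q n) /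
        (Wneg p q (n + 2) + y 0 * Wneg p q (n + 1)) := by
    intro n
    induction n with
    | zero =>
      rw [hrec 0]
      have h0 : Wneg p q 0 = 0 := by simp [Wneg, W]
      have h1 : Wneg p q 1 = 1 := by simp [Wneg, W]
      have h2 : Wneg p q 2 = -p := by simp [Wneg, W]; ring
      rw [h0, h1, h2]
      ring_nf
    | succ n ih =>
      have hD : Wneg p q (n + 2) + y 0 * Wneg p q (n + 1) ≠ 0 := hden (n + 1)
      have h1 : -p + y (n + 1) ≠ 0 := hne (n + 1)
      have hA : Wneg p q (n + 3) + y 0 * Wneg p q (n + 2) =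
          -p * (Wneg p q (n + 2) + y 0 * Wneg p q (n + 1)) +
            (q * Wneg p q (n + 1) + y 0 * q * Wneg p q n) := by
        rw [show n + 3 = (n + 1) + 2 from rfl, wneg_rec, wneg_rec]
        ring
      have key : -p + y (n + 1) =
          (Wneg p q (n + 3) + y 0 * Wneg p q (n + 2)) /
            (Wneg p q (n + 2) + y 0 * Wneg p q (n + 1)) := by
        rw [ih, hA]
        have hD2 : Wneg p q (n + 2) + Wneg p q (n + 1) * y 0 ≠ 0 := by rwa [mul_comm]
        field_simp
      have hD' : Wneg p q (n + 3) + y 0 * Wneg p q (n + 2) ≠ 0 := by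
        intro h
        apply h1
        rw [key, h, zero_div]
      rw [hrec (n + 1), key, div_div_eq_mul_div]
      congr 1
      ring
  intro n hn
  obtain ⟨m, rfl⟩ := Nat.exists_eq_add_of_le' hn
  simpa using main m
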